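/- Eigenfunctions of the isotonic oscillator. Fix a real α ≥ 1/2 and a natural number k. For every x > 0, the function ψ_k^α satisfies the eigenvalue equation of the isotonic oscillator Hamiltonian L_α = (1/2)(−d²/dx² + x² + (α² − 1/4)/x²): namely, (1/2) · ( −(ψ_k^α)''(x) + x² ψ_k^α(x) + ((α² − 1/4)/x²) ψ_k^α(x) ) = (2k + α + 1) · ψ_k^α(x), where (ψ_k^α)'' denotes the second derivative. -/

import Mathlib

open MeasureTheory

/-- Rising factorial (Pochhammer symbol) `(a)_j = ∏_{i=0}^{j-1} (a + i)`. -/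
noncomputable def risingFactorial (a : ℝ) (j : ℕ) : ℝ :=
  ∏ i ∈ Finset.range j, (a + i)

/-- Generalized Laguerre polynomial `L_k^{(α)}(x)`. -/
noncomputable def laguerreL (k : ℕ) (α x : ℝ) : ℝ :=
  ∑ i ∈ Finset.range (k + 1),
    ((-1 : ℝ) ^ i / (i.factorial * (k - i).factorial)) *
      risingFactorial (α + i + 1) (k - i) * x ^ i

/-- Eigenfunctions of the isotonic oscillator:
`ψ_k^α(x) = √(2 k! / Γ(k+α+1)) x^{α+1/2} e^{−x²/2} L_k^{(α)}(x²)`. -/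
noncomputable def psiIso (α : ℝ) (k : ℕ) (x : ℝ) : ℝ :=
  Real.sqrt (2 * k.factorial / Real.Gamma (k + α + 1)) *
    x ^ (α + 1 / 2) * Real.exp (-x ^ 2 / 2) * laguerreL k α (x ^ 2)

/-! ### Auxiliary definitions and lemmas -/

noncomputable def gfun (γ : ℝ) (x : ℝ) : ℝ := x ^ γ * Real.exp (-x^2/2)

noncomputable def ccoef (α : ℝ) (k i : ℕ) : ℝ :=
  (-1 : ℝ)^i / (i.factorial * (k-i).factorial) * risingFactorial (α+i+1) (k-i)

lemma gfun_hasDerivAt (γ : ℝ) {x : ℝ} (hx : 0 < x) :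
    HasDerivAt (gfun γ) (γ * gfun (γ-1) x - gfun (γ+1) x) x := by
  have h1 : HasDerivAt (fun y : ℝ => y ^ γ) (γ * x ^ (γ-1)) x :=
    Real.hasDerivAt_rpow_const (Or.inl hx.ne')
  have h0 : HasDerivAt (fun y : ℝ => -y^2/2) (-x) x := by
    have := (hasDerivAt_pow 2 x).neg.div_const 2
    refine this.congr_deriv ?_
    push_cast; ring
  have h2 := h0.exp
  have := h1.mul h2
  unfold gfun
  refine this.congr_deriv ?_
  have hx1 : x ^ (γ+1) = x ^ γ * x := by rw [Real.rpow_add hx, Real.rpow_one]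
  rw [hx1]; ring

lemma gfun_mul_sq (γ : ℝ) {x : ℝ} (hx : 0 < x) : x^2 * gfun γ x = gfun (γ+2) x := by
  unfold gfun
  rw [Real.rpow_add hx, show (2:ℝ) = ((2:ℕ):ℝ) by norm_num, Real.rpow_natCast]
  ring

lemma perterm (α : ℝ) (i : ℕ) {x : ℝ} (hx : 0 < x) :
    (1/2 : ℝ) * (-((α+1/2+2*i) * ((α+1/2+2*i-1) * gfun (α+1/2+2*i-2) x - gfun (α+1/2+2*i) x)
              - ((α+1/2+2*i+1) * gfun (α+1/2+2*i) x - gfun (α+1/2+2*i+2) x))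
         + x^2 * gfun (α+1/2+2*i) x
         + ((α^2-1/4)/x^2) * gfun (α+1/2+2*i) x)
    = (α+1+2*i) * gfun (α+1/2+2*i) x - 2*i*(α+i) * gfun (α+1/2+2*i-2) x := by
  have h1 := gfun_mul_sq (α+1/2+2*i) hx
  have h2 := gfun_mul_sq (α+1/2+2*(i:ℝ)-2) hx
  rw [show (α+1/2+2*(i:ℝ)-2)+2 = α+1/2+2*i by ring] at h2
  have hx2 : (x:ℝ)^2 ≠ 0 := pow_ne_zero _ hx.ne'
  set G2 := gfun (α+1/2+2*(i:ℝ)-2) x with hG2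
  set G0 := gfun (α+1/2+2*(i:ℝ)) x with hG0
  set G4 := gfun (α+1/2+2*(i:ℝ)+2) x with hG4
  field_simp
  linear_combination 16*x^2*h1 + (4 - 16*α^2)*h2

lemma rf_succ (a : ℝ) (n : ℕ) : risingFactorial a (n+1) = a * risingFactorial (a+1) n := by
  unfold risingFactorial
  rw [Finset.prod_range_succ']
  simp only [Nat.cast_zero, add_zero]
  rw [mul_comm]
  congr 1
  apply Finset.prod_congr rfl
  intro i _
  push_cast; ring

lemma crec (α : ℝ) (k i : ℕ) (h : i < k) :
    ccoef α k (i+1) * ((i+1) * (α+i+1)) = ((i:ℝ) - k) * ccoef α k i := by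
  obtain ⟨m, hm⟩ : ∃ m, k - i = m + 1 := ⟨k - i - 1, by omega⟩
  have hk1 : k - (i+1) = m := by omega
  have hkn : k = i + m + 1 := by omega
  have hki : (i : ℝ) - k = -(m + 1) := by
    rw [hkn]; push_cast; ring
  unfold ccoef
  rw [hm, hk1, rf_succ]
  have h2 : risingFactorial (α+i+1+1) m = risingFactorial (α+(i+1)+1) m := by
    congr 1; push_cast; ring
  rw [h2]
  have hf1 : ((i+1).factorial : ℝ) = (i+1) * i.factorial := by
    rw [Nat.factorial_succ]; push_cast; ring
  have hf2 : ((m+1).factorial : ℝ) = (m+1) * m.factorial := by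
    rw [Nat.factorial_succ]; push_cast; ring
  have ne1 : (i.factorial : ℝ) ≠ 0 := Nat.cast_ne_zero.2 i.factorial_ne_zero
  have ne2 : (m.factorial : ℝ) ≠ 0 := Nat.cast_ne_zero.2 m.factorial_ne_zero
  have ne3 : ((i:ℝ)+1) ≠ 0 := by positivity
  have ne4 : ((m:ℝ)+1) ≠ 0 := by positivity
  rw [hf1, hf2, pow_succ, hki]
  push_cast
  field_simp

lemma psi_eq (α : ℝ) (k : ℕ) {x : ℝ} (hx : 0 < x) :
    psiIso α k x = Real.sqrt (2 * k.factorial / Real.Gamma (k + α + 1)) *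
      ∑ i ∈ Finset.range (k+1), ccoef α k i * gfun (α+1/2+2*i) x := by
  unfold psiIso laguerreL ccoef gfun
  rw [Finset.mul_sum, Finset.mul_sum]
  refine Finset.sum_congr rfl fun i _ => ?_
  have h1 : (x^2)^i = x ^ ((2*i : ℕ) : ℝ) := by
    rw [Real.rpow_natCast, ← pow_mul]
  have h2 : x ^ (α+1/2) * x ^ ((2*i : ℕ) : ℝ) = x ^ (α+1/2+2*(i:ℝ)) := by
    rw [← Real.rpow_add hx]
    congr 1
    push_cast; ring
  rw [h1]
  calc Real.sqrt (2 * k.factorial / Real.Gamma (k + α + 1)) * x ^ (α + 1 / 2) *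
        Real.exp (-x ^ 2 / 2) *
        ((-1 : ℝ) ^ i / (i.factorial * (k - i).factorial) *
          risingFactorial (α + i + 1) (k - i) * x ^ ((2*i : ℕ) : ℝ))
      = Real.sqrt (2 * k.factorial / Real.Gamma (k + α + 1)) *
        ((-1 : ℝ) ^ i / (i.factorial * (k - i).factorial) *
          risingFactorial (α + i + 1) (k - i) *
          ((x ^ (α + 1 / 2) * x ^ ((2*i : ℕ) : ℝ)) * Real.exp (-x ^ 2 / 2))) := by ring
    _ = _ := by rw [h2]

lemma key (α : ℝ) (k : ℕ) {x : ℝ} (hx : 0 < x) :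
    ∑ i ∈ Finset.range (k+1), ccoef α k i *
        ((α+1+2*i) * gfun (α+1/2+2*i) x - 2*i*(α+i) * gfun (α+1/2+2*i-2) x)
    = ∑ i ∈ Finset.range (k+1), (2*k+α+1) * (ccoef α k i * gfun (α+1/2+2*i) x) := by
  have split : (∑ i ∈ Finset.range (k+1), ccoef α k i *
        ((α+1+2*i) * gfun (α+1/2+2*i) x - 2*i*(α+i) * gfun (α+1/2+2*i-2) x))
      = (∑ i ∈ Finset.range (k+1), ccoef α k i * (α+1+2*i) * gfun (α+1/2+2*i) x)
        - ∑ i ∈ Finset.range (k+1), ccoef α k i * (2*i*(α+i)) * gfun (α+1/2+2*(i:ℝ)-2) x := by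
    rw [← Finset.sum_sub_distrib]
    exact Finset.sum_congr rfl fun i _ => by ring
  rw [split]
  have hsec : (∑ i ∈ Finset.range (k+1), ccoef α k i * (2*i*(α+i)) * gfun (α+1/2+2*(i:ℝ)-2) x)
      = ∑ i ∈ Finset.range (k+1), (2*((i:ℝ)-k)) * ccoef α k i * gfun (α+1/2+2*i) x := by
    rw [Finset.sum_range_succ', Finset.sum_range_succ]
    have hz1 : ccoef α k 0 * (2*(0:ℕ)*(α+(0:ℕ))) * gfun (α+1/2+2*((0:ℕ):ℝ)-2) x = 0 := by
      norm_num
    have hz2 : (2*((k:ℝ)-k)) * ccoef α k k * gfun (α+1/2+2*k) x = 0 := by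
      norm_num
    rw [hz1, hz2, add_zero, add_zero]
    refine Finset.sum_congr rfl fun i hi => ?_
    have hik : i < k := Finset.mem_range.1 hi
    have harg : (α+1/2+2*((i+1:ℕ):ℝ)-2) = α+1/2+2*(i:ℝ) := by push_cast; ring
    rw [harg]
    have hc := crec α k i hik
    push_cast
    push_cast at hc
    linear_combination 2 * gfun (α+1/2+2*(i:ℝ)) x * hc
  rw [hsec, ← Finset.sum_sub_distrib]
  exact Finset.sum_congr rfl fun i _ => by ring

lemma hasDerivAt_psi (α : ℝ) (k : ℕ) {x : ℝ} (hx : 0 < x) :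
    HasDerivAt (psiIso α k)
      (Real.sqrt (2 * k.factorial / Real.Gamma (k + α + 1)) *
        ∑ i ∈ Finset.range (k+1), ccoef α k i *
          ((α+1/2+2*i) * gfun (α+1/2+2*i-1) x - gfun (α+1/2+2*i+1) x)) x := by
  have h0 : HasDerivAt (fun y => Real.sqrt (2 * k.factorial / Real.Gamma (k + α + 1)) *
      ∑ i ∈ Finset.range (k+1), ccoef α k i * gfun (α+1/2+2*i) y)
      (Real.sqrt (2 * k.factorial / Real.Gamma (k + α + 1)) *
        ∑ i ∈ Finset.range (k+1), ccoef α k i *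
          ((α+1/2+2*i) * gfun (α+1/2+2*i-1) x - gfun (α+1/2+2*i+1) x)) x := by
    refine HasDerivAt.const_mul _ (HasDerivAt.fun_sum fun i _ => ?_)
    exact (gfun_hasDerivAt _ hx).const_mul _
  refine h0.congr_of_eventuallyEq ?_
  filter_upwards [Ioi_mem_nhds hx] with y hy
  exact psi_eq α k hy

lemma hasDerivAt_psi' (α : ℝ) (k : ℕ) {x : ℝ} (hx : 0 < x) :
    HasDerivAt (fun y => Real.sqrt (2 * k.factorial / Real.Gamma (k + α + 1)) *
        ∑ i ∈ Finset.range (k+1), ccoef α k i *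
          ((α+1/2+2*i) * gfun (α+1/2+2*i-1) y - gfun (α+1/2+2*i+1) y))
      (Real.sqrt (2 * k.factorial / Real.Gamma (k + α + 1)) *
        ∑ i ∈ Finset.range (k+1), ccoef α k i *
          ((α+1/2+2*i) * ((α+1/2+2*i-1) * gfun (α+1/2+2*i-2) x - gfun (α+1/2+2*i) x)
            - ((α+1/2+2*i+1) * gfun (α+1/2+2*i) x - gfun (α+1/2+2*i+2) x))) x := by
  refine HasDerivAt.const_mul _ (HasDerivAt.fun_sum fun i _ => ?_)
  have h := (((gfun_hasDerivAt (α+1/2+2*(i:ℝ)-1) hx).const_mul (α+1/2+2*(i:ℝ))).sub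
    (gfun_hasDerivAt (α+1/2+2*(i:ℝ)+1) hx)).const_mul (ccoef α k i)
  refine h.congr_deriv ?_
  rw [show α+1/2+2*(i:ℝ)-1-1 = α+1/2+2*(i:ℝ)-2 by ring,
    show α+1/2+2*(i:ℝ)-1+1 = α+1/2+2*(i:ℝ) by ring,
    show α+1/2+2*(i:ℝ)+1-1 = α+1/2+2*(i:ℝ) by ring,
    show α+1/2+2*(i:ℝ)+1+1 = α+1/2+2*(i:ℝ)+2 by ring]

/-- The eigenfunctions `ψ_k^α` satisfy the eigenvalue equation of the isotonic
oscillator Hamiltonian `L_α = (1/2)(−d²/dx² + x² + (α²−1/4)/x²)` with eigenvalue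
`2k + α + 1`, for every `x > 0`. -/
theorem isotonic_eigenfunction (α : ℝ) (hα : 1 / 2 ≤ α) (k : ℕ) :
    ∀ x : ℝ, 0 < x →
      (1 / 2) * (-(deriv (deriv (psiIso α k)) x) + x ^ 2 * psiIso α k x +
          ((α ^ 2 - 1 / 4) / x ^ 2) * psiIso α k x)
        = (2 * k + α + 1) * psiIso α k x := by
  intro x hx
  have hE : deriv (psiIso α k) =ᶠ[nhds x] (fun y =>
      Real.sqrt (2 * k.factorial / Real.Gamma (k + α + 1)) *
        ∑ i ∈ Finset.range (k+1), ccoef α k i *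
          ((α+1/2+2*i) * gfun (α+1/2+2*i-1) y - gfun (α+1/2+2*i+1) y)) := by
    filter_upwards [Ioi_mem_nhds hx] with y hy
    exact (hasDerivAt_psi α k hy).deriv
  have hD2 : deriv (deriv (psiIso α k)) x =
      Real.sqrt (2 * k.factorial / Real.Gamma (k + α + 1)) *
        ∑ i ∈ Finset.range (k+1), ccoef α k i *
          ((α+1/2+2*i) * ((α+1/2+2*i-1) * gfun (α+1/2+2*i-2) x - gfun (α+1/2+2*i) x)
            - ((α+1/2+2*i+1) * gfun (α+1/2+2*i) x - gfun (α+1/2+2*i+2) x)) := by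
    rw [hE.deriv_eq]
    exact (hasDerivAt_psi' α k hx).deriv
  rw [hD2, psi_eq α k hx]
  set S := Real.sqrt (2 * k.factorial / Real.Gamma (k + α + 1)) with hS
  have hsum : (1/2 : ℝ) * (-(∑ i ∈ Finset.range (k+1), ccoef α k i *
          ((α+1/2+2*i) * ((α+1/2+2*i-1) * gfun (α+1/2+2*i-2) x - gfun (α+1/2+2*i) x)
            - ((α+1/2+2*i+1) * gfun (α+1/2+2*i) x - gfun (α+1/2+2*i+2) x)))
        + x^2 * ∑ i ∈ Finset.range (k+1), ccoef α k i * gfun (α+1/2+2*i) x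
        + ((α^2-1/4)/x^2) * ∑ i ∈ Finset.range (k+1), ccoef α k i * gfun (α+1/2+2*i) x)
      = (2*k+α+1) * ∑ i ∈ Finset.range (k+1), ccoef α k i * gfun (α+1/2+2*i) x := by
    have step1 : (1/2 : ℝ) * (-(∑ i ∈ Finset.range (k+1), ccoef α k i *
          ((α+1/2+2*i) * ((α+1/2+2*i-1) * gfun (α+1/2+2*i-2) x - gfun (α+1/2+2*i) x)
            - ((α+1/2+2*i+1) * gfun (α+1/2+2*i) x - gfun (α+1/2+2*i+2) x)))
        + x^2 * ∑ i ∈ Finset.range (k+1), ccoef α k i * gfun (α+1/2+2*i) x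
        + ((α^2-1/4)/x^2) * ∑ i ∈ Finset.range (k+1), ccoef α k i * gfun (α+1/2+2*i) x)
      = ∑ i ∈ Finset.range (k+1), ccoef α k i *
          ((1/2 : ℝ) * (-((α+1/2+2*i) * ((α+1/2+2*i-1) * gfun (α+1/2+2*i-2) x - gfun (α+1/2+2*i) x)
              - ((α+1/2+2*i+1) * gfun (α+1/2+2*i) x - gfun (α+1/2+2*i+2) x))
            + x^2 * gfun (α+1/2+2*i) x
            + ((α^2-1/4)/x^2) * gfun (α+1/2+2*i) x)) := by
      simp only [Finset.mul_sum, ← Finset.sum_neg_distrib, ← Finset.sum_add_distrib]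
      exact Finset.sum_congr rfl fun i _ => by ring
    rw [step1]
    have step2 : ∀ i ∈ Finset.range (k+1), ccoef α k i *
          ((1/2 : ℝ) * (-((α+1/2+2*i) * ((α+1/2+2*i-1) * gfun (α+1/2+2*i-2) x - gfun (α+1/2+2*i) x)
              - ((α+1/2+2*i+1) * gfun (α+1/2+2*i) x - gfun (α+1/2+2*i+2) x))
            + x^2 * gfun (α+1/2+2*i) x
            + ((α^2-1/4)/x^2) * gfun (α+1/2+2*i) x))
        = ccoef α k i * ((α+1+2*i) * gfun (α+1/2+2*i) x - 2*i*(α+i) * gfun (α+1/2+2*i-2) x) := by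
      intro i _
      rw [perterm α i hx]
    rw [Finset.sum_congr rfl step2, key α k hx, ← Finset.mul_sum]
  linear_combination S * hsum
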